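/- Let β ≥ 1/2. Then for every x > 0 the inequality ψ(x + β) ≥ ln x holds. -/

import Mathlib

open Real

open Set Filter


-- core elementary inequality
lemma Flog_mono : MonotoneOn (fun t : ℝ => Real.log (1 + t) - Real.log (1 - t) - 2 * t)
    (Set.Ico (0:ℝ) 1) := by
  apply monotoneOn_of_deriv_nonneg (convex_Ico 0 1)
  · apply ContinuousOn.sub
    apply ContinuousOn.sub
    · exact (Real.continuousOn_log.comp (by fun_prop) (fun t ht => by
        simp only [mem_Ico] at ht
        simp only [Set.mem_compl_iff, Set.mem_singleton_iff]
        intro h; nlinarith [ht.1]))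
    · exact (Real.continuousOn_log.comp (by fun_prop) (fun t ht => by
        simp only [mem_Ico] at ht
        simp only [Set.mem_compl_iff, Set.mem_singleton_iff]
        intro h; nlinarith [ht.2]))
    · fun_prop
  · intro t ht
    rw [interior_Ico] at ht
    obtain ⟨ht0, ht1⟩ := ht
    have h1 : (1:ℝ) + t ≠ 0 := by nlinarith
    have h2 : (1:ℝ) - t ≠ 0 := by nlinarith
    exact (((((hasDerivAt_id t).const_add 1).log h1).sub
      (((hasDerivAt_id t).const_sub 1).log h2)).sub
      ((hasDerivAt_id t).const_mul 2)).differentiableAt.differentiableWithinAt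
  · intro t ht
    rw [interior_Ico] at ht
    obtain ⟨ht0, ht1⟩ := ht
    have h1 : (0:ℝ) < 1 + t := by linarith
    have h2 : (0:ℝ) < 1 - t := by linarith
    have hd : HasDerivAt (fun t : ℝ => Real.log (1 + t) - Real.log (1 - t) - 2 * t)
        (1 / (1 + t) - (-1) / (1 - t) - 2 * 1) t := by
      exact ((((hasDerivAt_id t).const_add 1).log h1.ne').sub
        (((hasDerivAt_id t).const_sub 1).log h2.ne')).sub ((hasDerivAt_id t).const_mul 2)
    rw [hd.deriv]
    rw [neg_div, sub_neg_eq_add, mul_one]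
    have h3 : 1 / (1 + t) + 1 / (1 - t) = 2 / ((1+t)*(1-t)) := by
      field_simp; ring
    rw [sub_nonneg, h3, le_div_iff₀ (by nlinarith)]
    nlinarith

lemma key_log_ineq {x : ℝ} (hx : 0 < x) : 1 / (x + 1/2) ≤ Real.log (x + 1) - Real.log x := by
  set a : ℝ := 1 / (2*x + 1) with ha_def
  have h2x : (0:ℝ) < 2*x + 1 := by linarith
  have ha0 : 0 < a := by positivity
  have ha1 : a < 1 := by
    rw [ha_def, div_lt_one h2x]; linarith
  have hm := Flog_mono (Set.mem_Ico.mpr ⟨le_refl 0, one_pos⟩)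
    (Set.mem_Ico.mpr ⟨ha0.le, ha1⟩) ha0.le
  simp only [mul_zero, sub_zero, add_zero, sub_self, Real.log_one] at hm
  -- hm : 0 ≤ log (1+a) - log (1-a) - 2*a  (after simp of F 0 = 0)
  have e1 : 1 + a = (2*x + 2) / (2*x + 1) := by rw [ha_def]; field_simp; ring
  have e2 : 1 - a = (2*x) / (2*x + 1) := by rw [ha_def]; field_simp; ring
  have e3 : Real.log (1 + a) - Real.log (1 - a) = Real.log (x+1) - Real.log x := by
    rw [e1, e2, Real.log_div (by linarith) h2x.ne', Real.log_div (by positivity) h2x.ne',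
      show 2*x + 2 = 2 * (x+1) by ring, show (2:ℝ)*x = 2*x from rfl,
      Real.log_mul two_ne_zero (by linarith), Real.log_mul two_ne_zero hx.ne']
    ring
  have e4 : 2 * a = 1 / (x + 1/2) := by
    rw [ha_def]; field_simp
  nlinarith [hm, e3, e4]


/-- The psi (digamma) function: the derivative of `ln ∘ Γ`. -/
noncomputable def psi : ℝ → ℝ := deriv (fun x : ℝ => Real.log (Real.Gamma x))

lemma psi_diff {y : ℝ} (hy : 0 < y) :
    DifferentiableAt ℝ (fun x : ℝ => Real.log (Real.Gamma x)) y := by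
  refine (Real.differentiableAt_Gamma ?_).log (Real.Gamma_pos_of_pos hy).ne'
  intro m; exact ne_of_gt (by have : (0:ℝ) ≤ m := m.cast_nonneg; linarith)

lemma psi_rec {y : ℝ} (hy : 0 < y) : psi (y + 1) = psi y + 1 / y := by
  have h_rec : ∀ t : ℝ, 0 < t →
      Real.log (Real.Gamma (t + 1)) = Real.log (Real.Gamma t) + Real.log t := by
    intro t ht
    rw [Real.Gamma_add_one ht.ne', Real.log_mul ht.ne' (Real.Gamma_pos_of_pos ht).ne', add_comm]
  show deriv (fun x : ℝ => Real.log (Real.Gamma x)) (y + 1)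
      = deriv (fun x : ℝ => Real.log (Real.Gamma x)) y + 1 / y
  rw [← deriv_comp_add_const, one_div, ← Real.deriv_log,
    ← deriv_add (psi_diff hy) (Real.differentiableAt_log hy.ne')]
  apply Filter.EventuallyEq.deriv_eq
  filter_upwards [eventually_gt_nhds hy] with t ht
  exact h_rec t ht

lemma psi_mono {a b : ℝ} (ha : 0 < a) (hab : a ≤ b) : psi a ≤ psi b :=
  Real.convexOn_log_Gamma.monotoneOn_deriv (fun y hy => psi_diff hy)
    (Set.mem_Ioi.mpr ha) (Set.mem_Ioi.mpr (lt_of_lt_of_le ha hab)) hab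

lemma psi_lb {y : ℝ} (hy : 1 < y) : Real.log (y - 1) ≤ psi y := by
  have h1 : (0:ℝ) < y - 1 := by linarith
  have hy0 : (0:ℝ) < y := by linarith
  have hs := Real.convexOn_log_Gamma.slope_le_deriv (Set.mem_Ioi.mpr h1)
    (Set.mem_Ioi.mpr hy0) (by linarith) (psi_diff hy0)
  refine le_trans (le_of_eq ?_) hs
  rw [slope_def_field, show y - (y - 1) = (1:ℝ) by ring, div_one]
  have hG : Real.Gamma y = (y - 1) * Real.Gamma (y - 1) := by
    conv_lhs => rw [show y = (y - 1) + 1 by ring, Real.Gamma_add_one h1.ne']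
  simp only [Function.comp_apply]
  rw [hG, Real.log_mul h1.ne' (Real.Gamma_pos_of_pos h1).ne']
  ring

theorem stmt_6 (β : ℝ) (hβ : 1 / 2 ≤ β) (x : ℝ) (hx : 0 < x) :
    Real.log x ≤ psi (x + β) := by
  have hstep : ∀ t : ℝ, 0 < t →
      psi (t + 1 + 1/2) - Real.log (t + 1) ≤ psi (t + 1/2) - Real.log t := by
    intro t ht
    have h := key_log_ineq ht
    rw [show t + 1 + 1/2 = (t + 1/2) + 1 by ring, psi_rec (by linarith : (0:ℝ) < t + 1/2)]
    linarith
  have hiter : ∀ n : ℕ, psi (x + n + 1/2) - Real.log (x + n) ≤ psi (x + 1/2) - Real.log x := by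
    intro n
    induction n with
    | zero => simp
    | succ n ih =>
      have h := hstep (x + n) (by positivity)
      push_cast
      calc psi (x + (n + 1) + 1/2) - Real.log (x + (n + 1))
          = psi ((x + n) + 1 + 1/2) - Real.log ((x + n) + 1) := by ring_nf
        _ ≤ psi ((x + n) + 1/2) - Real.log (x + n) := h
        _ ≤ psi (x + 1/2) - Real.log x := ih
  -- nonnegativity of psi (x + 1/2) - log x
  have hnonneg : 0 ≤ psi (x + 1/2) - Real.log x := by
    by_contra hneg
    push_neg at hneg
    set c : ℝ := Real.log x - psi (x + 1/2) with hc
    have hc0 : 0 < c := by simp only [hc]; linarith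
    obtain ⟨n, hn⟩ := exists_nat_gt ((1/2) / c + 1)
    have h1n : (1:ℝ) ≤ (n:ℝ) := by
      have : (0:ℝ) ≤ (1/2) / c := by positivity
      linarith
    have hxn : (0:ℝ) < x + n - 1/2 := by linarith
    have hlb := psi_lb (y := x + n + 1/2) (by linarith)
    have hub := hiter n
    -- log (x+n) - log (x+n-1/2) ≤ (1/2)/(x+n-1/2)
    have hlog : Real.log (x + n) - Real.log (x + n - 1/2) ≤ (1/2) / (x + n - 1/2) := by
      rw [← Real.log_div (by linarith) hxn.ne']
      have h1 : (x + n) / (x + n - 1/2) - 1 = (1/2) / (x + n - 1/2) := by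
        rw [div_sub_one hxn.ne', show x + (n:ℝ) - (x + (n:ℝ) - 1/2) = (1:ℝ)/2 by ring]
      calc Real.log ((x + n) / (x + n - 1/2)) ≤ (x + n) / (x + n - 1/2) - 1 :=
            Real.log_le_sub_one_of_pos (by positivity)
        _ = (1/2) / (x + n - 1/2) := h1
    -- so c ≤ (1/2)/(x+n-1/2)
    have h2 : c ≤ (1/2) / (x + n - 1/2) := by
      have : Real.log (x + n - 1/2) ≤ psi (x + n + 1/2) := by
        have := hlb; rw [show x + n + 1/2 - 1 = x + n - 1/2 by ring] at this; exact this
      simp only [hc]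
      linarith
    have h3 : x + n - 1/2 ≤ (1/2) / c := by
      rw [le_div_iff₀ hc0]
      calc (x + n - 1/2) * c ≤ (x + n - 1/2) * ((1/2) / (x + n - 1/2)) := by
            exact mul_le_mul_of_nonneg_left h2 hxn.le
        _ = 1/2 := by rw [mul_comm, div_mul_cancel₀ _ hxn.ne']
    linarith
  have h12 : Real.log x ≤ psi (x + 1/2) := by linarith
  exact h12.trans (psi_mono (by linarith) (by linarith))
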